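/- arXiv:1902.05798 — 2 statements merged into one kernel-verified Lean document; each statement's English description precedes it below -/
import Mathlib

section
/- Let ζ ∈ ℂ with ζ ≠ 0, let s > 0, h > 0 be real numbers, and let ℓ ≥ 0 be an integer. Then: (i) ∫₀^h r^ℓ · exp(√(sr)·ζ) dr = (2/s^{ℓ+1}) · [ (2ℓ+1)!/ζ^{2ℓ+2} + exp(√(sh)·ζ) · ∑_{j=0}^{2ℓ+1} (−1)^j · (2ℓ+1)! / ((2ℓ+1−j)! · ζ^{j+1}) · (sh)^{(2ℓ+1−j)/2} ]; and (ii) ∫₀^h r^{ℓ−1/2} · s^{1/2} · exp(√(sr)·ζ) dr = (2/s^{ℓ}) · [ −(2ℓ)!/ζ^{2ℓ+1} + exp(√(sh)·ζ) · ∑_{j=0}^{2ℓ} (−1)^j · (2ℓ)! / ((2ℓ−j)! · ζ^{j+1}) · (sh)^{(2ℓ−j)/2} ]. -/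
open scoped Nat

open Complex Set in

noncomputable def Phi15 (ζ : ℂ) : ℕ → ℂ → ℂ
  | 0 => fun u => Complex.exp (u * ζ) / ζ
  | (n+1) => fun u => u ^ (n+1) * Complex.exp (u * ζ) / ζ - (((n:ℂ)+1) / ζ) * Phi15 ζ n u

lemma Phi15_hasDerivAt (ζ : ℂ) (hζ : ζ ≠ 0) (n : ℕ) (u : ℂ) :
    HasDerivAt (Phi15 ζ n) (u ^ n * Complex.exp (u * ζ)) u := by
  induction n generalizing u with
  | zero =>
    have he : HasDerivAt (fun u : ℂ => Complex.exp (u * ζ)) (Complex.exp (u * ζ) * ζ) u := by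
      simpa using ((hasDerivAt_id u).mul_const ζ).cexp
    have := he.div_const ζ
    simp only [Phi15]
    refine this.congr_deriv ?_
    symm
    field_simp
  | succ n ih =>
    have he : HasDerivAt (fun u : ℂ => Complex.exp (u * ζ)) (Complex.exp (u * ζ) * ζ) u := by
      simpa using ((hasDerivAt_id u).mul_const ζ).cexp
    have hp : HasDerivAt (fun u : ℂ => u ^ (n+1)) (((n:ℂ)+1) * u ^ n) u := by
      simpa using hasDerivAt_pow (n+1) u
    have h1 := ((hp.mul he).div_const ζ).sub (((ih u)).const_mul (((n:ℂ)+1) / ζ))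
    have : HasDerivAt (Phi15 ζ (n+1))
        ((((n:ℂ)+1) * u ^ n * Complex.exp (u * ζ) + u ^ (n+1) * (Complex.exp (u * ζ) * ζ)) / ζ -
          ((n:ℂ)+1) / ζ * (u ^ n * Complex.exp (u * ζ))) u := by
      exact h1
    convert this using 1
    field_simp
    ring

lemma Phi15_eq (ζ : ℂ) (hζ : ζ ≠ 0) (n : ℕ) (u : ℂ) :
    Phi15 ζ n u = Complex.exp (u * ζ) *
      ∑ j ∈ Finset.range (n+1),
        (-1 : ℂ) ^ j * (n ! : ℂ) / (((n - j)! : ℂ) * ζ ^ (j+1)) * u ^ (n - j) := by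
  induction n generalizing u with
  | zero => simp [Phi15, div_eq_mul_inv]
  | succ n ih =>
    rw [Finset.sum_range_succ']
    have hterm : ∀ j ∈ Finset.range (n+1),
        (-1 : ℂ) ^ (j+1) * ((n+1)! : ℂ) / (((n + 1 - (j+1))! : ℂ) * ζ ^ (j+1+1)) * u ^ (n + 1 - (j+1))
        = (-(((n:ℂ)+1) / ζ)) * ((-1 : ℂ) ^ j * (n ! : ℂ) / (((n - j)! : ℂ) * ζ ^ (j+1)) * u ^ (n - j)) := by
      intro j hj
      have h1 : n + 1 - (j+1) = n - j := by omega
      rw [h1]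
      have h2 : ((n+1)! : ℂ) = ((n:ℂ)+1) * (n ! : ℂ) := by
        push_cast [Nat.factorial_succ]; ring
      rw [h2]
      have h3 : (((n - j)! : ℂ)) ≠ 0 := Nat.cast_ne_zero.2 (Nat.factorial_ne_zero _)
      field_simp
      ring
    rw [Finset.sum_congr rfl hterm, ← Finset.mul_sum]
    have h0 : (-1 : ℂ) ^ 0 * ((n+1)! : ℂ) / (((n + 1 - 0)! : ℂ) * ζ ^ (0+1)) * u ^ (n + 1 - 0)
        = u ^ (n+1) / ζ := by
      have h3 : (((n+1)! : ℂ)) ≠ 0 := Nat.cast_ne_zero.2 (Nat.factorial_ne_zero _)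
      simp only [Nat.sub_zero, pow_zero, one_mul, zero_add, pow_one]
      field_simp
    rw [h0]
    simp only [Phi15, ih]
    ring

lemma Phi15_zero (ζ : ℂ) (n : ℕ) : Phi15 ζ n 0 = (-1 : ℂ) ^ n * (n ! : ℂ) / ζ ^ (n+1) := by
  induction n with
  | zero => simp [Phi15]
  | succ n ih =>
    simp only [Phi15, ih]
    have h2 : ((n+1)! : ℂ) = ((n:ℂ)+1) * (n ! : ℂ) := by
      push_cast [Nat.factorial_succ]; ring
    rw [h2]
    simp [pow_succ]
    ring

open Complex Set in
lemma F15_hasDerivAt (ζ : ℂ) (hζ : ζ ≠ 0) (s : ℝ) (hs : 0 < s) (n : ℕ) (r : ℝ) (hr : 0 < r) :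
    HasDerivAt (fun r : ℝ => Phi15 ζ n ((Real.sqrt (s*r) : ℝ) : ℂ))
      (((Real.sqrt (s*r) : ℝ) : ℂ) ^ n * Complex.exp (((Real.sqrt (s*r) : ℝ) : ℂ) * ζ) *
        ((s : ℂ) / (2 * ((Real.sqrt (s*r) : ℝ) : ℂ)))) r := by
  have hsr : 0 < s * r := mul_pos hs hr
  have h1 : HasDerivAt (fun r : ℝ => Real.sqrt (s*r)) (s / (2 * Real.sqrt (s*r))) r := by
    have h0 : HasDerivAt (fun r : ℝ => s*r) s r := by
      simpa using (hasDerivAt_id r).const_mul s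
    have := (Real.hasDerivAt_sqrt hsr.ne').comp r h0
    refine this.congr_deriv ?_
    symm
    ring
  have h2 := ((Phi15_hasDerivAt ζ hζ n ((Real.sqrt (s*r) : ℝ) : ℂ)).comp_ofReal).scomp r h1
  refine h2.congr_deriv ?_
  symm
  rw [Complex.real_smul]
  push_cast
  ring

lemma Phi15_continuous (ζ : ℂ) (hζ : ζ ≠ 0) (n : ℕ) : Continuous (Phi15 ζ n) :=
  continuous_iff_continuousAt.2 fun u => (Phi15_hasDerivAt ζ hζ n u).continuousAt

open Complex Set in
theorem part1 (ζ : ℂ) (hζ : ζ ≠ 0) (s h : ℝ) (hs : 0 < s) (hh : 0 < h) (ℓ : ℕ) :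
    (∫ r in (0:ℝ)..h, (r : ℂ) ^ ℓ * Complex.exp ((Real.sqrt (s * r) : ℂ) * ζ))
      = (2 / (s : ℂ) ^ (ℓ + 1)) *
        (((2 * ℓ + 1)! : ℂ) / ζ ^ (2 * ℓ + 2) +
          Complex.exp ((Real.sqrt (s * h) : ℂ) * ζ) *
            ∑ j ∈ Finset.range (2 * ℓ + 2),
              (-1 : ℂ) ^ j * ((2 * ℓ + 1)! : ℂ) /
                (((2 * ℓ + 1 - j)! : ℂ) * ζ ^ (j + 1)) *
                  ((Real.sqrt (s * h) : ℂ)) ^ (2 * ℓ + 1 - j)) := by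
  set n := 2 * ℓ + 1 with hn
  set F : ℝ → ℂ := fun r => (2 / (s : ℂ) ^ (ℓ + 1)) * Phi15 ζ n ((Real.sqrt (s*r) : ℝ) : ℂ)
    with hF
  have hcont : ContinuousOn F (Icc 0 h) := by
    apply Continuous.continuousOn
    exact continuous_const.mul ((Phi15_continuous ζ hζ n).comp
      (Complex.continuous_ofReal.comp (Real.continuous_sqrt.comp
        (continuous_const.mul continuous_id))))
  have hderiv : ∀ r ∈ Ioo (0:ℝ) h,
      HasDerivAt F ((r : ℂ) ^ ℓ * Complex.exp ((Real.sqrt (s * r) : ℂ) * ζ)) r := by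
    intro r hr
    have hd := (F15_hasDerivAt ζ hζ s hs n r hr.1).const_mul (2 / (s : ℂ) ^ (ℓ + 1))
    refine hd.congr_deriv ?_
    symm
    have hu0 : Real.sqrt (s*r) ≠ 0 :=
      (Real.sqrt_pos.2 (mul_pos hs hr.1)).ne'
    have hu2 : ((Real.sqrt (s*r) : ℝ) : ℂ) ^ 2 = (s : ℂ) * (r : ℂ) := by
      rw [← Complex.ofReal_pow, Real.sq_sqrt (mul_pos hs hr.1).le]
      push_cast; ring
    have hun : ((Real.sqrt (s*r) : ℝ) : ℂ) ^ n
        = ((s : ℂ) * (r : ℂ)) ^ ℓ * ((Real.sqrt (s*r) : ℝ) : ℂ) := by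
      rw [hn, pow_succ, pow_mul, hu2]
    rw [hun]
    have hu0' : ((Real.sqrt (s*r) : ℝ) : ℂ) ≠ 0 := Complex.ofReal_ne_zero.2 hu0
    have hs0 : (s : ℂ) ≠ 0 := Complex.ofReal_ne_zero.2 hs.ne'
    have hss : ((Real.sqrt s : ℝ) : ℂ) ≠ 0 :=
      Complex.ofReal_ne_zero.2 (Real.sqrt_pos.2 hs).ne'
    have hrr : ((Real.sqrt r : ℝ) : ℂ) ≠ 0 :=
      Complex.ofReal_ne_zero.2 (Real.sqrt_pos.2 hr.1).ne'
    field_simp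
    ring
  have hint : IntervalIntegrable
      (fun r : ℝ => (r : ℂ) ^ ℓ * Complex.exp ((Real.sqrt (s * r) : ℂ) * ζ)) MeasureTheory.volume 0 h := by
    apply Continuous.intervalIntegrable
    apply Continuous.mul (by fun_prop)
    exact Complex.continuous_exp.comp ((Complex.continuous_ofReal.comp
      (Real.continuous_sqrt.comp (continuous_const.mul continuous_id))).mul continuous_const)
  rw [intervalIntegral.integral_eq_sub_of_hasDerivAt_of_le hh.le hcont hderiv hint, hF]
  simp only [mul_zero, Real.sqrt_zero, Complex.ofReal_zero, Phi15_zero, hn]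
  rw [Phi15_eq ζ hζ]
  have h1 : ((-1 : ℂ)) ^ (2 * ℓ + 1) = -1 := by rw [pow_succ, pow_mul]; norm_num
  rw [h1]
  have h2 : 2*ℓ+1+1 = 2*ℓ+2 := by ring
  rw [h2]
  ring

open Complex Set in
theorem part2 (ζ : ℂ) (hζ : ζ ≠ 0) (s h : ℝ) (hs : 0 < s) (hh : 0 < h) (ℓ : ℕ) :
    (∫ r in (0:ℝ)..h,
        (Real.sqrt s : ℂ) * (r : ℂ) ^ ℓ / (Real.sqrt r : ℂ) *
          Complex.exp ((Real.sqrt (s * r) : ℂ) * ζ))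
      = (2 / (s : ℂ) ^ ℓ) *
        (-(((2 * ℓ)! : ℂ) / ζ ^ (2 * ℓ + 1)) +
          Complex.exp ((Real.sqrt (s * h) : ℂ) * ζ) *
            ∑ j ∈ Finset.range (2 * ℓ + 1),
              (-1 : ℂ) ^ j * ((2 * ℓ)! : ℂ) /
                (((2 * ℓ - j)! : ℂ) * ζ ^ (j + 1)) *
                  ((Real.sqrt (s * h) : ℂ)) ^ (2 * ℓ - j)) := by
  set n := 2 * ℓ with hn
  set f : ℝ → ℂ := fun r => (Real.sqrt s : ℂ) * (r : ℂ) ^ ℓ / (Real.sqrt r : ℂ) *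
          Complex.exp ((Real.sqrt (s * r) : ℂ) * ζ) with hf
  set F : ℝ → ℂ := fun r => (2 / (s : ℂ) ^ ℓ) * Phi15 ζ n ((Real.sqrt (s*r) : ℝ) : ℂ)
    with hF
  have hcont : ContinuousOn F (Icc 0 h) := by
    apply Continuous.continuousOn
    exact continuous_const.mul ((Phi15_continuous ζ hζ n).comp
      (Complex.continuous_ofReal.comp (Real.continuous_sqrt.comp
        (continuous_const.mul continuous_id))))
  have hderiv : ∀ r ∈ Ioo (0:ℝ) h, HasDerivAt F (f r) r := by
    intro r hr
    have hd := (F15_hasDerivAt ζ hζ s hs n r hr.1).const_mul (2 / (s : ℂ) ^ ℓ)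
    refine hd.congr_deriv ?_
    symm
    have hu0 : Real.sqrt (s*r) ≠ 0 := (Real.sqrt_pos.2 (mul_pos hs hr.1)).ne'
    have hu2 : ((Real.sqrt (s*r) : ℝ) : ℂ) ^ 2 = (s : ℂ) * (r : ℂ) := by
      rw [← Complex.ofReal_pow, Real.sq_sqrt (mul_pos hs hr.1).le]
      push_cast; ring
    have hun : ((Real.sqrt (s*r) : ℝ) : ℂ) ^ n = ((s : ℂ) * (r : ℂ)) ^ ℓ := by
      rw [hn, pow_mul, hu2]
    rw [hf, hun]
    have hu0' : ((Real.sqrt (s*r) : ℝ) : ℂ) ≠ 0 := Complex.ofReal_ne_zero.2 hu0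
    have hs0 : (s : ℂ) ≠ 0 := Complex.ofReal_ne_zero.2 hs.ne'
    have hss : ((Real.sqrt s : ℝ) : ℂ) ≠ 0 :=
      Complex.ofReal_ne_zero.2 (Real.sqrt_pos.2 hs).ne'
    have hrr : ((Real.sqrt r : ℝ) : ℂ) ≠ 0 :=
      Complex.ofReal_ne_zero.2 (Real.sqrt_pos.2 hr.1).ne'
    have hmul : ((Real.sqrt (s*r) : ℝ) : ℂ) = ((Real.sqrt s : ℝ) : ℂ) * ((Real.sqrt r : ℝ) : ℂ) := by
      rw [← Complex.ofReal_mul, Real.sqrt_mul hs.le]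
    have hs2 : ((Real.sqrt s : ℝ) : ℂ) * ((Real.sqrt s : ℝ) : ℂ) = (s : ℂ) := by
      rw [← Complex.ofReal_mul, Real.mul_self_sqrt hs.le]
    have hr2 : ((Real.sqrt r : ℝ) : ℂ) * ((Real.sqrt r : ℝ) : ℂ) = (r : ℂ) := by
      rw [← Complex.ofReal_mul, Real.mul_self_sqrt hr.1.le]
    rw [hmul]
    field_simp
    have hE : Complex.exp (((Real.sqrt (s*r) : ℝ) : ℂ) * ζ) = Complex.exp (((Real.sqrt s : ℝ) : ℂ) * ((Real.sqrt r : ℝ) : ℂ) * ζ) := by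
      rw [hmul]
    linear_combination ((s:ℂ))^ℓ * (r:ℂ)^ℓ * Complex.exp (((Real.sqrt s : ℝ) : ℂ) * ((Real.sqrt r : ℝ) : ℂ) * ζ) * hs2 + ((Real.sqrt s : ℝ) : ℂ)^2 * (r:ℂ)^ℓ * (s:ℂ)^ℓ * hE
  have hint : IntervalIntegrable f MeasureTheory.volume 0 h := by
    rw [intervalIntegrable_iff, uIoc_of_le hh.le]
    set C : ℝ := Real.sqrt s * h ^ ℓ * Real.exp (Real.sqrt (s*h) * ‖ζ‖) with hC
    have hg : MeasureTheory.IntegrableOn (fun r : ℝ => C * r ^ (-(1/2) : ℝ))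
        (Ioc 0 h) MeasureTheory.volume := by
      have := (intervalIntegral.intervalIntegrable_rpow' (a := 0) (b := h) (r := (-(1/2) : ℝ)) (by norm_num)).const_mul C
      rwa [intervalIntegrable_iff, uIoc_of_le hh.le] at this
    apply hg.mono'
    · apply ContinuousOn.aestronglyMeasurable _ measurableSet_Ioc
      apply ContinuousOn.mul
      · apply ContinuousOn.div (by fun_prop) (by fun_prop)
        intro r hr
        exact Complex.ofReal_ne_zero.2 (Real.sqrt_pos.2 hr.1).ne'
      · exact (Complex.continuous_exp.comp ((Complex.continuous_ofReal.comp
          (Real.continuous_sqrt.comp (continuous_const.mul continuous_id))).mul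
            continuous_const)).continuousOn
    · rw [MeasureTheory.ae_restrict_iff' measurableSet_Ioc]
      apply MeasureTheory.ae_of_all
      intro r hr
      have hr0 : (0:ℝ) < r := hr.1
      have hrh : r ≤ h := hr.2
      rw [hf]
      rw [norm_mul]
      have h1 : ‖(Real.sqrt s : ℂ) * (r : ℂ) ^ ℓ / (Real.sqrt r : ℂ)‖
          = Real.sqrt s * r ^ ℓ / Real.sqrt r := by
        rw [norm_div, norm_mul, Complex.norm_real, Complex.norm_real, norm_pow,
          Complex.norm_real]
        rw [Real.norm_of_nonneg (Real.sqrt_nonneg s),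
          Real.norm_of_nonneg hr0.le, Real.norm_of_nonneg (Real.sqrt_nonneg r)]
      have h2 : ‖Complex.exp ((Real.sqrt (s * r) : ℂ) * ζ)‖
          ≤ Real.exp (Real.sqrt (s*h) * ‖ζ‖) := by
        rw [Complex.norm_exp]
        apply Real.exp_le_exp.2
        have : ((Real.sqrt (s * r) : ℂ) * ζ).re = Real.sqrt (s*r) * ζ.re := by
          simp [Complex.mul_re]
        rw [this]
        calc Real.sqrt (s*r) * ζ.re ≤ Real.sqrt (s*r) * |ζ.re| :=
              mul_le_mul_of_nonneg_left (le_abs_self _) (Real.sqrt_nonneg _)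
          _ ≤ Real.sqrt (s*h) * ‖ζ‖ := by
              apply mul_le_mul
              · exact Real.sqrt_le_sqrt (mul_le_mul_of_nonneg_left hrh hs.le)
              · exact Complex.abs_re_le_norm ζ
              · exact abs_nonneg _
              · exact Real.sqrt_nonneg _
      have h3 : Real.sqrt s * r ^ ℓ / Real.sqrt r ≤ (Real.sqrt s * h ^ ℓ) * r ^ (-(1/2) : ℝ) := by
        have hrpow : r ^ (-(1/2) : ℝ) = (Real.sqrt r)⁻¹ := by
          rw [Real.rpow_neg hr0.le, Real.sqrt_eq_rpow]
        rw [hrpow, div_eq_mul_inv]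
        apply mul_le_mul_of_nonneg_right _ (inv_nonneg.2 (Real.sqrt_nonneg r))
        exact mul_le_mul_of_nonneg_left (pow_le_pow_left₀ hr0.le hrh ℓ) (Real.sqrt_nonneg s)
      calc ‖(Real.sqrt s : ℂ) * (r : ℂ) ^ ℓ / (Real.sqrt r : ℂ)‖ *
            ‖Complex.exp ((Real.sqrt (s * r) : ℂ) * ζ)‖
          ≤ (Real.sqrt s * h ^ ℓ * r ^ (-(1/2) : ℝ)) *
              Real.exp (Real.sqrt (s*h) * ‖ζ‖) := by
            rw [h1]
            apply mul_le_mul h3 h2 (norm_nonneg _)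
            positivity
        _ = C * r ^ (-(1/2) : ℝ) := by rw [hC]; ring
  rw [intervalIntegral.integral_eq_sub_of_hasDerivAt_of_le hh.le hcont hderiv hint, hF]
  simp only [mul_zero, Real.sqrt_zero, Complex.ofReal_zero, Phi15_zero, hn]
  rw [Phi15_eq ζ hζ]
  have h1 : ((-1 : ℂ)) ^ (2 * ℓ) = 1 := by rw [pow_mul]; norm_num
  rw [h1]
  ring

/-- Closed-form values of the integrals `∫₀ʰ rˡ e^{√(sr)ζ} dr` and
`∫₀ʰ rˡ⁻¹ᐟ² s¹ᐟ² e^{√(sr)ζ} dr` for `ζ ≠ 0`, `s, h > 0`. -/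
theorem stmt15 (ζ : ℂ) (hζ : ζ ≠ 0) (s h : ℝ) (hs : 0 < s) (hh : 0 < h) (ℓ : ℕ) :
    (∫ r in (0:ℝ)..h, (r : ℂ) ^ ℓ * Complex.exp ((Real.sqrt (s * r) : ℂ) * ζ))
      = (2 / (s : ℂ) ^ (ℓ + 1)) *
        (((2 * ℓ + 1)! : ℂ) / ζ ^ (2 * ℓ + 2) +
          Complex.exp ((Real.sqrt (s * h) : ℂ) * ζ) *
            ∑ j ∈ Finset.range (2 * ℓ + 2),
              (-1 : ℂ) ^ j * ((2 * ℓ + 1)! : ℂ) /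
                (((2 * ℓ + 1 - j)! : ℂ) * ζ ^ (j + 1)) *
                  ((Real.sqrt (s * h) : ℂ)) ^ (2 * ℓ + 1 - j)) ∧
    (∫ r in (0:ℝ)..h,
        (Real.sqrt s : ℂ) * (r : ℂ) ^ ℓ / (Real.sqrt r : ℂ) *
          Complex.exp ((Real.sqrt (s * r) : ℂ) * ζ))
      = (2 / (s : ℂ) ^ ℓ) *
        (-(((2 * ℓ)! : ℂ) / ζ ^ (2 * ℓ + 1)) +
          Complex.exp ((Real.sqrt (s * h) : ℂ) * ζ) *
            ∑ j ∈ Finset.range (2 * ℓ + 1),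
              (-1 : ℂ) ^ j * ((2 * ℓ)! : ℂ) /
                (((2 * ℓ - j)! : ℂ) * ζ ^ (j + 1)) *
                  ((Real.sqrt (s * h) : ℂ)) ^ (2 * ℓ - j)) :=
  ⟨part1 ζ hζ s h hs hh ℓ, part2 ζ hζ s h hs hh ℓ⟩
end

section
/- Let Ω, λ, u, h, Γ_h^−, Γ_h^+, ν⁻, ν⁺ be as in the context with α = 1/3, i.e., θ₀ = π/3. Suppose Γ_h^− and Γ_h^+ are generalized singular lines of u with constant parameters C₁, C₂ ∈ ℂ respectively, i.e., ∇u(x)·ν⁻ + C₁·u(x) = 0 for all x ∈ Γ_h^− and ∇u(x)·ν⁺ + C₂·u(x) = 0 for all x ∈ Γ_h^+. If C₁ ≠ C₂ and 1 + (4/(3λ))·(C₁² + C₁C₂ + C₂²) ≠ 0, then u(0) = 0. -/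
/-- First partial derivative of `u : ℝ × ℝ → ℂ` in the `x₁` direction. -/
noncomputable def pd1 (u : ℝ × ℝ → ℂ) : ℝ × ℝ → ℂ := fun x => fderiv ℝ u x (1, 0)

/-- First partial derivative of `u : ℝ × ℝ → ℂ` in the `x₂` direction. -/
noncomputable def pd2 (u : ℝ × ℝ → ℂ) : ℝ × ℝ → ℂ := fun x => fderiv ℝ u x (0, 1)

open Filter Topology Set


private lemma fderiv_pd_eval (w : ℝ × ℝ → ℂ) (x v : ℝ × ℝ) :
    fderiv ℝ w x v = (v.1 : ℂ) * pd1 w x + (v.2 : ℂ) * pd2 w x := by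
  have hv : v = v.1 • ((1:ℝ), (0:ℝ)) + v.2 • ((0:ℝ), (1:ℝ)) := by
    ext <;> simp
  nth_rewrite 1 [hv]
  rw [map_add, map_smul, map_smul]
  simp [pd1, pd2, Complex.real_smul]

private lemma pd_analytic (v : ℝ × ℝ) {w : ℝ × ℝ → ℂ} {Ω : Set (ℝ × ℝ)}
    (hw : AnalyticOnNhd ℝ w Ω) :
    AnalyticOnNhd ℝ (fun x => fderiv ℝ w x v) Ω := fun x hx =>
  ((ContinuousLinearMap.apply ℝ ℂ v).analyticAt (fderiv ℝ w x)).comp ((hw x hx).fderiv)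

private lemma pd1_analytic {w : ℝ × ℝ → ℂ} {Ω : Set (ℝ × ℝ)} (hw : AnalyticOnNhd ℝ w Ω) :
    AnalyticOnNhd ℝ (pd1 w) Ω := pd_analytic (1,0) hw

private lemma pd2_analytic {w : ℝ × ℝ → ℂ} {Ω : Set (ℝ × ℝ)} (hw : AnalyticOnNhd ℝ w Ω) :
    AnalyticOnNhd ℝ (pd2 w) Ω := pd_analytic (0,1) hw

private lemma schwarz {w : ℝ × ℝ → ℂ} {Ω : Set (ℝ × ℝ)} (hw : AnalyticOnNhd ℝ w Ω)
    {x : ℝ × ℝ} (hx : x ∈ Ω) : pd1 (pd2 w) x = pd2 (pd1 w) x := by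
  have hsym : IsSymmSndFDerivAt ℝ w x :=
    ((hw x hx).contDiffAt).isSymmSndFDerivAt le_top
  have hdd : DifferentiableAt ℝ (fderiv ℝ w) x := ((hw x hx).fderiv).differentiableAt
  have key : ∀ v v' : ℝ × ℝ, fderiv ℝ (fun y => fderiv ℝ w y v) x v'
      = fderiv ℝ (fderiv ℝ w) x v' v := by
    intro v v'
    have h1 : fderiv ℝ (fun y => (fderiv ℝ w y) ((fun _ : ℝ × ℝ => v) y)) x
        = (fderiv ℝ w x).comp (fderiv ℝ (fun _ : ℝ × ℝ => v) x)
          + (fderiv ℝ (fderiv ℝ w) x).flip v :=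
      fderiv_clm_apply hdd (differentiableAt_const v)
    simp only [fderiv_const] at h1
    rw [show (fun y => fderiv ℝ w y v) = (fun y => (fderiv ℝ w y) ((fun _ : ℝ × ℝ => v) y)) from rfl,
      h1]
    simp
  show fderiv ℝ (fun y => fderiv ℝ w y (0,1)) x (1,0) = fderiv ℝ (fun y => fderiv ℝ w y (1,0)) x (0,1)
  rw [key, key]
  exact hsym _ _

private lemma fderiv_comb3_apply {f₁ f₂ f₃ : ℝ × ℝ → ℂ} {x : ℝ × ℝ}
    (h₁ : DifferentiableAt ℝ f₁ x) (h₂ : DifferentiableAt ℝ f₂ x)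
    (h₃ : DifferentiableAt ℝ f₃ x) (c₁ c₂ c₃ : ℂ) (v : ℝ × ℝ) :
    fderiv ℝ (fun y => c₁ * f₁ y + c₂ * f₂ y + c₃ * f₃ y) x v
      = c₁ * fderiv ℝ f₁ x v + c₂ * fderiv ℝ f₂ x v + c₃ * fderiv ℝ f₃ x v := by
  have H : HasFDerivAt (fun y => c₁ * f₁ y + c₂ * f₂ y + c₃ * f₃ y)
      (c₁ • fderiv ℝ f₁ x + c₂ • fderiv ℝ f₂ x + c₃ • fderiv ℝ f₃ x) x :=
    ((h₁.hasFDerivAt.const_mul c₁).add (h₂.hasFDerivAt.const_mul c₂)).add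
      (h₃.hasFDerivAt.const_mul c₃)
  rw [H.fderiv]
  simp [smul_eq_mul]

private lemma fderiv_comb6_apply {f₁ f₂ f₃ f₄ f₅ f₆ : ℝ × ℝ → ℂ} {x : ℝ × ℝ}
    (h₁ : DifferentiableAt ℝ f₁ x) (h₂ : DifferentiableAt ℝ f₂ x)
    (h₃ : DifferentiableAt ℝ f₃ x) (h₄ : DifferentiableAt ℝ f₄ x)
    (h₅ : DifferentiableAt ℝ f₅ x) (h₆ : DifferentiableAt ℝ f₆ x)
    (c₁ c₂ c₃ c₄ c₅ c₆ : ℂ) (v : ℝ × ℝ) :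
    fderiv ℝ (fun y => c₁ * f₁ y + c₂ * f₂ y + c₃ * f₃ y + c₄ * f₄ y + c₅ * f₅ y + c₆ * f₆ y) x v
      = c₁ * fderiv ℝ f₁ x v + c₂ * fderiv ℝ f₂ x v + c₃ * fderiv ℝ f₃ x v
        + c₄ * fderiv ℝ f₄ x v + c₅ * fderiv ℝ f₅ x v + c₆ * fderiv ℝ f₆ x v := by
  have H : HasFDerivAt
      (fun y => c₁ * f₁ y + c₂ * f₂ y + c₃ * f₃ y + c₄ * f₄ y + c₅ * f₅ y + c₆ * f₆ y)
      (c₁ • fderiv ℝ f₁ x + c₂ • fderiv ℝ f₂ x + c₃ • fderiv ℝ f₃ x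
        + c₄ • fderiv ℝ f₄ x + c₅ • fderiv ℝ f₅ x + c₆ • fderiv ℝ f₆ x) x :=
    ((((((h₁.hasFDerivAt.const_mul c₁).add (h₂.hasFDerivAt.const_mul c₂)).add
      (h₃.hasFDerivAt.const_mul c₃)).add (h₄.hasFDerivAt.const_mul c₄)).add
      (h₅.hasFDerivAt.const_mul c₅)).add (h₆.hasFDerivAt.const_mul c₆))
  rw [H.fderiv]
  simp [smul_eq_mul]

private lemma seg_to_nhds {w : ℝ × ℝ → ℂ} (hw0 : AnalyticAt ℝ w 0) {h : ℝ} (hh : 0 < h)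
    (d : ℝ × ℝ) (hz : ∀ r : ℝ, 0 ≤ r → r ≤ h → w (r • d) = 0) :
    ∀ᶠ r in 𝓝 (0:ℝ), w (r • d) = 0 := by
  have hsm : AnalyticAt ℝ (fun r : ℝ => r • d) 0 := analyticAt_id.smul analyticAt_const
  have hg : AnalyticAt ℝ (fun r : ℝ => w (r • d)) 0 := by
    have h1 : AnalyticAt ℝ w ((fun r : ℝ => r • d) 0) := by
      simp only [zero_smul]; exact hw0
    exact AnalyticAt.comp (f := fun r : ℝ => r • d) h1 hsm
  have hev : ∀ᶠ r in 𝓝[>] (0:ℝ), w (r • d) = 0 := by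
    filter_upwards [Ioo_mem_nhdsGT_of_mem (Set.left_mem_Ico.2 hh)] with r hr
    exact hz r hr.1.le hr.2.le
  have hfreq : ∃ᶠ r in 𝓝[≠] (0:ℝ), w (r • d) = 0 :=
    (hev.frequently).filter_mono (nhdsWithin_mono 0 (fun x hx => ne_of_gt hx))
  exact hg.frequently_zero_iff_eventually_zero.mp hfreq

private lemma nhds_step {w : ℝ × ℝ → ℂ} {Ω : Set (ℝ × ℝ)} (hΩ : IsOpen Ω)
    (hw : AnalyticOnNhd ℝ w Ω) (h0 : (0 : ℝ × ℝ) ∈ Ω) (d : ℝ × ℝ)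
    (hev : ∀ᶠ r in 𝓝 (0:ℝ), w (r • d) = 0) :
    ∀ᶠ r in 𝓝 (0:ℝ), fderiv ℝ w (r • d) d = 0 := by
  have hcont : Continuous fun r : ℝ => r • d := continuous_id.smul continuous_const
  have hΩev : ∀ᶠ r in 𝓝 (0:ℝ), (r • d) ∈ Ω := by
    have h1 : ((0:ℝ) • d) ∈ Ω := by rw [zero_smul]; exact h0
    have h2 := hcont.continuousAt.preimage_mem_nhds (hΩ.mem_nhds h1)
    filter_upwards [h2] with r hr; exact hr
  have hall := hev.and hΩev
  rw [Filter.eventually_iff, mem_nhds_iff] at hall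
  obtain ⟨t, hts, hto, ht0⟩ := hall
  refine Filter.eventually_iff.2 (mem_nhds_iff.2 ⟨t, ?_, hto, ht0⟩)
  intro r hrt
  have h₁ : HasDerivAt (fun ρ : ℝ => w (ρ • d)) (fderiv ℝ w (r • d) d) r := by
    have hdw : DifferentiableAt ℝ w (r • d) := (hw _ (hts hrt).2).differentiableAt
    have hl : HasDerivAt (fun ρ : ℝ => ρ • d) d r := by
      simpa using (hasDerivAt_id r).smul_const d
    exact hdw.hasFDerivAt.comp_hasDerivAt r hl
  have h₂ : HasDerivAt (fun ρ : ℝ => w (ρ • d)) 0 r := by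
    have heq : (fun ρ : ℝ => w (ρ • d)) =ᶠ[𝓝 r] (fun _ => (0:ℂ)) := by
      filter_upwards [hto.mem_nhds hrt] with ρ hρ
      exact (hts hρ).1
    exact (hasDerivAt_const r (0:ℂ)).congr_of_eventuallyEq heq
  exact h₁.unique h₂

private lemma line_facts {w : ℝ × ℝ → ℂ} {Ω : Set (ℝ × ℝ)} (hΩ : IsOpen Ω)
    (hw : AnalyticOnNhd ℝ w Ω) (h0 : (0 : ℝ × ℝ) ∈ Ω) {h : ℝ} (hh : 0 < h) (d : ℝ × ℝ)
    (hz : ∀ r : ℝ, 0 ≤ r → r ≤ h → w (r • d) = 0) :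
    w 0 = 0 ∧ fderiv ℝ w 0 d = 0 ∧ fderiv ℝ (fun x => fderiv ℝ w x d) 0 d = 0 := by
  have ev0 := seg_to_nhds (hw 0 h0) hh d hz
  have ev1 := nhds_step hΩ hw h0 d ev0
  have ev2 := nhds_step hΩ (pd_analytic d hw) h0 d ev1
  refine ⟨?_, ?_, ?_⟩
  · simpa using ev0.self_of_nhds
  · simpa using ev1.self_of_nhds
  · simpa using ev2.self_of_nhds

/-- Two generalized singular lines with constant parameters `C₁ ≠ C₂` intersecting at the
origin at the angle `θ₀ = π/3` (i.e. `α = 1/3`): if `1 + (4/(3λ))(C₁² + C₁C₂ + C₂²) ≠ 0`,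
then `u(0) = 0`. -/
theorem stmt19
    (Ω : Set (ℝ × ℝ)) (hΩ : IsOpen Ω)
    (lam : ℝ) (hlam : 0 < lam)
    (u : ℝ × ℝ → ℂ)
    (hu_an : AnalyticOnNhd ℝ u Ω)
    (hu_eq : ∀ x ∈ Ω, pd1 (pd1 u) x + pd2 (pd2 u) x + (lam : ℂ) * u x = 0)
    (θ₀ : ℝ) (hθ₀ : θ₀ = (1 / 3 : ℝ) * Real.pi)
    (h : ℝ) (hh : 0 < h)
    (hdisk : ∀ x : ℝ × ℝ, x.1 ^ 2 + x.2 ^ 2 ≤ h ^ 2 → x ∈ Ω)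
    (C₁ C₂ : ℂ)
    (hbc₁ : ∀ r : ℝ, 0 ≤ r → r ≤ h →
      fderiv ℝ u (r, 0) (0, -1) + C₁ * u (r, 0) = 0)
    (hbc₂ : ∀ r : ℝ, 0 ≤ r → r ≤ h →
      fderiv ℝ u (r * Real.cos θ₀, r * Real.sin θ₀) (-Real.sin θ₀, Real.cos θ₀)
        + C₂ * u (r * Real.cos θ₀, r * Real.sin θ₀) = 0)
    (hC : C₁ ≠ C₂)
    (hgen : (1 : ℂ) + (4 / (3 * (lam : ℂ))) * (C₁ ^ 2 + C₁ * C₂ + C₂ ^ 2) ≠ 0) :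
    u (0, 0) = 0 := by
  show u 0 = 0
  have h0 : (0 : ℝ × ℝ) ∈ Ω := hdisk (0, 0) (by norm_num [sq_nonneg])
  have hcos : Real.cos θ₀ = 1 / 2 := by
    rw [hθ₀, show (1 / 3 : ℝ) * Real.pi = Real.pi / 3 by ring]; exact Real.cos_pi_div_three
  have hsin : Real.sin θ₀ = Real.sqrt 3 / 2 := by
    rw [hθ₀, show (1 / 3 : ℝ) * Real.pi = Real.pi / 3 by ring]; exact Real.sin_pi_div_three
  -- analyticity of the partial derivatives
  have hu1 : AnalyticOnNhd ℝ (pd1 u) Ω := pd1_analytic hu_an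
  have hu2 : AnalyticOnNhd ℝ (pd2 u) Ω := pd2_analytic hu_an
  have hu11 : AnalyticOnNhd ℝ (pd1 (pd1 u)) Ω := pd1_analytic hu1
  have hu12 : AnalyticOnNhd ℝ (pd1 (pd2 u)) Ω := pd1_analytic hu2
  have hu21 : AnalyticOnNhd ℝ (pd2 (pd1 u)) Ω := pd2_analytic hu1
  have hu22 : AnalyticOnNhd ℝ (pd2 (pd2 u)) Ω := pd2_analytic hu2
  -- Schwarz symmetry facts
  have hcong : pd2 (pd1 u) =ᶠ[𝓝 (0 : ℝ × ℝ)] pd1 (pd2 u) := by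
    filter_upwards [hΩ.mem_nhds h0] with x hx
    exact (schwarz hu_an hx).symm
  have sw_u : pd2 (pd1 u) 0 = pd1 (pd2 u) 0 := (schwarz hu_an h0).symm
  have t121 : pd1 (pd2 (pd1 u)) 0 = pd1 (pd1 (pd2 u)) 0 := by
    show fderiv ℝ (pd2 (pd1 u)) 0 ((1:ℝ),(0:ℝ)) = fderiv ℝ (pd1 (pd2 u)) 0 ((1:ℝ),(0:ℝ))
    rw [hcong.fderiv_eq]
  have t211 : pd2 (pd1 (pd1 u)) 0 = pd1 (pd1 (pd2 u)) 0 := by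
    have h1 : pd2 (pd1 (pd1 u)) 0 = pd1 (pd2 (pd1 u)) 0 := (schwarz hu1 h0).symm
    rw [h1, t121]
  have t212 : pd2 (pd1 (pd2 u)) 0 = pd1 (pd2 (pd2 u)) 0 := (schwarz hu2 h0).symm
  have t221 : pd2 (pd2 (pd1 u)) 0 = pd1 (pd2 (pd2 u)) 0 := by
    have h1 : pd2 (pd2 (pd1 u)) 0 = pd2 (pd1 (pd2 u)) 0 := by
      show fderiv ℝ (pd2 (pd1 u)) 0 ((0:ℝ),(1:ℝ)) = fderiv ℝ (pd1 (pd2 u)) 0 ((0:ℝ),(1:ℝ))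
      rw [hcong.fderiv_eq]
    rw [h1, t212]
  ------------------------------------------------------------------
  -- LINE 1 : the segment on the x₁-axis
  ------------------------------------------------------------------
  have hwm_an : AnalyticOnNhd ℝ
      (fun x => C₁ * u x + (0 : ℂ) * pd1 u x + (-1 : ℂ) * pd2 u x) Ω := by
    intro x hx
    exact ((analyticAt_const.mul (hu_an x hx)).add (analyticAt_const.mul (hu1 x hx))).add
      (analyticAt_const.mul (hu2 x hx))
  have hzm : ∀ r : ℝ, 0 ≤ r → r ≤ h →
      (fun x => C₁ * u x + (0 : ℂ) * pd1 u x + (-1 : ℂ) * pd2 u x) (r • ((1:ℝ), (0:ℝ))) = 0 := by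
    intro r h0r hrh
    have hpt : r • ((1:ℝ), (0:ℝ)) = ((r : ℝ), (0 : ℝ)) := by ext <;> simp
    rw [hpt]
    have hb := hbc₁ r h0r hrh
    have he := fderiv_pd_eval u (r, 0) (0, -1)
    norm_num at he
    show C₁ * u (r, 0) + (0 : ℂ) * pd1 u (r, 0) + (-1 : ℂ) * pd2 u (r, 0) = 0
    linear_combination hb - he
  obtain ⟨m0, m1, m2⟩ := line_facts hΩ hwm_an h0 hh ((1:ℝ), (0:ℝ)) hzm
  have du0 : DifferentiableAt ℝ u 0 := (hu_an 0 h0).differentiableAt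
  have du1 : DifferentiableAt ℝ (pd1 u) 0 := (hu1 0 h0).differentiableAt
  have du2 : DifferentiableAt ℝ (pd2 u) 0 := (hu2 0 h0).differentiableAt
  have du11 : DifferentiableAt ℝ (pd1 (pd1 u)) 0 := (hu11 0 h0).differentiableAt
  have du12 : DifferentiableAt ℝ (pd1 (pd2 u)) 0 := (hu12 0 h0).differentiableAt
  have du21 : DifferentiableAt ℝ (pd2 (pd1 u)) 0 := (hu21 0 h0).differentiableAt
  have du22 : DifferentiableAt ℝ (pd2 (pd2 u)) 0 := (hu22 0 h0).differentiableAt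
  -- raw equation E1
  have rawE1 : C₁ * u 0 + (0 : ℂ) * pd1 u 0 + (-1 : ℂ) * pd2 u 0 = 0 := m0
  -- raw equation E2
  have rawE2 : C₁ * pd1 u 0 + (0 : ℂ) * pd1 (pd1 u) 0 + (-1 : ℂ) * pd1 (pd2 u) 0 = 0 := by
    have := fderiv_comb3_apply du0 du1 du2 C₁ 0 (-1) ((1:ℝ), (0:ℝ))
    rw [this] at m1
    exact m1
  -- raw equation E3
  have rawE3 : C₁ * pd1 (pd1 u) 0 + (0:ℂ) * pd1 (pd1 (pd1 u)) 0
      + (-1:ℂ) * pd1 (pd1 (pd2 u)) 0 = 0 := by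
    have hVm : (fun x => fderiv ℝ
          (fun y => C₁ * u y + (0 : ℂ) * pd1 u y + (-1 : ℂ) * pd2 u y) x ((1:ℝ), (0:ℝ)))
        =ᶠ[𝓝 (0 : ℝ × ℝ)]
        (fun x => C₁ * pd1 u x + (0 : ℂ) * pd1 (pd1 u) x + (-1 : ℂ) * pd1 (pd2 u) x) := by
      filter_upwards [hΩ.mem_nhds h0] with x hx
      exact fderiv_comb3_apply ((hu_an x hx).differentiableAt) ((hu1 x hx).differentiableAt)
        ((hu2 x hx).differentiableAt) C₁ 0 (-1) ((1:ℝ), (0:ℝ))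
    rw [hVm.fderiv_eq] at m2
    have := fderiv_comb3_apply du1 du11 du12 C₁ 0 (-1) ((1:ℝ), (0:ℝ))
    rw [this] at m2
    exact m2
  ------------------------------------------------------------------
  -- LINE 2 : the segment at angle θ₀
  ------------------------------------------------------------------
  have hwp_an : AnalyticOnNhd ℝ
      (fun x => C₂ * u x + (-(Real.sin θ₀ : ℂ)) * pd1 u x + ((Real.cos θ₀ : ℂ)) * pd2 u x) Ω := by
    intro x hx
    exact ((analyticAt_const.mul (hu_an x hx)).add (analyticAt_const.mul (hu1 x hx))).add
      (analyticAt_const.mul (hu2 x hx))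
  have hzp : ∀ r : ℝ, 0 ≤ r → r ≤ h →
      (fun x => C₂ * u x + (-(Real.sin θ₀ : ℂ)) * pd1 u x + ((Real.cos θ₀ : ℂ)) * pd2 u x)
        (r • ((Real.cos θ₀ : ℝ), (Real.sin θ₀ : ℝ))) = 0 := by
    intro r h0r hrh
    have hpt : r • ((Real.cos θ₀ : ℝ), (Real.sin θ₀ : ℝ))
        = ((r * Real.cos θ₀ : ℝ), (r * Real.sin θ₀ : ℝ)) := by ext <;> simp
    rw [hpt]
    have hb := hbc₂ r h0r hrh
    have he : fderiv ℝ u (r * Real.cos θ₀, r * Real.sin θ₀) (-Real.sin θ₀, Real.cos θ₀)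
        = ((-Real.sin θ₀ : ℝ) : ℂ) * pd1 u (r * Real.cos θ₀, r * Real.sin θ₀)
          + ((Real.cos θ₀ : ℝ) : ℂ) * pd2 u (r * Real.cos θ₀, r * Real.sin θ₀) :=
      fderiv_pd_eval u (r * Real.cos θ₀, r * Real.sin θ₀) (-Real.sin θ₀, Real.cos θ₀)
    rw [Complex.ofReal_neg] at he
    show C₂ * u (r * Real.cos θ₀, r * Real.sin θ₀)
        + (-(Real.sin θ₀ : ℂ)) * pd1 u (r * Real.cos θ₀, r * Real.sin θ₀)
        + ((Real.cos θ₀ : ℂ)) * pd2 u (r * Real.cos θ₀, r * Real.sin θ₀) = 0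
    linear_combination hb - he
  obtain ⟨n0, n1, n2⟩ := line_facts hΩ hwp_an h0 hh ((Real.cos θ₀ : ℝ), (Real.sin θ₀ : ℝ)) hzp
  -- evaluation facts for the direction dp
  have fd_eval : ∀ w : ℝ × ℝ → ℂ, fderiv ℝ w 0 ((Real.cos θ₀ : ℝ), (Real.sin θ₀ : ℝ))
      = (Real.cos θ₀ : ℂ) * pd1 w 0 + (Real.sin θ₀ : ℂ) * pd2 w 0 := by
    intro w
    exact fderiv_pd_eval w 0 ((Real.cos θ₀ : ℝ), (Real.sin θ₀ : ℝ))
  -- raw equation E4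
  have rawE4 : C₂ * u 0 + (-(Real.sin θ₀ : ℂ)) * pd1 u 0 + ((Real.cos θ₀ : ℂ)) * pd2 u 0 = 0 := n0
  -- raw equation E5
  have rawE5 : C₂ * ((Real.cos θ₀ : ℂ) * pd1 u 0 + (Real.sin θ₀ : ℂ) * pd2 u 0)
      + (-(Real.sin θ₀ : ℂ)) * ((Real.cos θ₀ : ℂ) * pd1 (pd1 u) 0 + (Real.sin θ₀ : ℂ) * pd2 (pd1 u) 0)
      + ((Real.cos θ₀ : ℂ)) * ((Real.cos θ₀ : ℂ) * pd1 (pd2 u) 0 + (Real.sin θ₀ : ℂ) * pd2 (pd2 u) 0)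
      = 0 := by
    have := fderiv_comb3_apply du0 du1 du2 C₂ (-(Real.sin θ₀ : ℂ)) ((Real.cos θ₀ : ℂ))
      ((Real.cos θ₀ : ℝ), (Real.sin θ₀ : ℝ))
    rw [this, fd_eval u, fd_eval (pd1 u), fd_eval (pd2 u)] at n1
    exact n1
  -- raw equation E6
  have rawE6 : (C₂ * (Real.cos θ₀ : ℂ)) * ((Real.cos θ₀ : ℂ) * pd1 (pd1 u) 0 + (Real.sin θ₀ : ℂ) * pd2 (pd1 u) 0)
      + (C₂ * (Real.sin θ₀ : ℂ)) * ((Real.cos θ₀ : ℂ) * pd1 (pd2 u) 0 + (Real.sin θ₀ : ℂ) * pd2 (pd2 u) 0)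
      + (-(Real.sin θ₀ : ℂ) * (Real.cos θ₀ : ℂ)) * ((Real.cos θ₀ : ℂ) * pd1 (pd1 (pd1 u)) 0 + (Real.sin θ₀ : ℂ) * pd2 (pd1 (pd1 u)) 0)
      + (-(Real.sin θ₀ : ℂ) * (Real.sin θ₀ : ℂ)) * ((Real.cos θ₀ : ℂ) * pd1 (pd2 (pd1 u)) 0 + (Real.sin θ₀ : ℂ) * pd2 (pd2 (pd1 u)) 0)
      + ((Real.cos θ₀ : ℂ) * (Real.cos θ₀ : ℂ)) * ((Real.cos θ₀ : ℂ) * pd1 (pd1 (pd2 u)) 0 + (Real.sin θ₀ : ℂ) * pd2 (pd1 (pd2 u)) 0)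
      + ((Real.cos θ₀ : ℂ) * (Real.sin θ₀ : ℂ)) * ((Real.cos θ₀ : ℂ) * pd1 (pd2 (pd2 u)) 0 + (Real.sin θ₀ : ℂ) * pd2 (pd2 (pd2 u)) 0)
      = 0 := by
    have hVp : (fun x => fderiv ℝ
          (fun y => C₂ * u y + (-(Real.sin θ₀ : ℂ)) * pd1 u y + ((Real.cos θ₀ : ℂ)) * pd2 u y)
          x ((Real.cos θ₀ : ℝ), (Real.sin θ₀ : ℝ)))
        =ᶠ[𝓝 (0 : ℝ × ℝ)]
        (fun x => (C₂ * (Real.cos θ₀ : ℂ)) * pd1 u x + (C₂ * (Real.sin θ₀ : ℂ)) * pd2 u x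
          + (-(Real.sin θ₀ : ℂ) * (Real.cos θ₀ : ℂ)) * pd1 (pd1 u) x
          + (-(Real.sin θ₀ : ℂ) * (Real.sin θ₀ : ℂ)) * pd2 (pd1 u) x
          + ((Real.cos θ₀ : ℂ) * (Real.cos θ₀ : ℂ)) * pd1 (pd2 u) x
          + ((Real.cos θ₀ : ℂ) * (Real.sin θ₀ : ℂ)) * pd2 (pd2 u) x) := by
      filter_upwards [hΩ.mem_nhds h0] with x hx
      have hc := fderiv_comb3_apply ((hu_an x hx).differentiableAt)
        ((hu1 x hx).differentiableAt) ((hu2 x hx).differentiableAt)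
        C₂ (-(Real.sin θ₀ : ℂ)) ((Real.cos θ₀ : ℂ)) ((Real.cos θ₀ : ℝ), (Real.sin θ₀ : ℝ))
      have e0 : fderiv ℝ u x ((Real.cos θ₀ : ℝ), (Real.sin θ₀ : ℝ))
          = ((Real.cos θ₀ : ℝ) : ℂ) * pd1 u x + ((Real.sin θ₀ : ℝ) : ℂ) * pd2 u x :=
        fderiv_pd_eval u x ((Real.cos θ₀ : ℝ), (Real.sin θ₀ : ℝ))
      have e1 : fderiv ℝ (pd1 u) x ((Real.cos θ₀ : ℝ), (Real.sin θ₀ : ℝ))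
          = ((Real.cos θ₀ : ℝ) : ℂ) * pd1 (pd1 u) x + ((Real.sin θ₀ : ℝ) : ℂ) * pd2 (pd1 u) x :=
        fderiv_pd_eval (pd1 u) x ((Real.cos θ₀ : ℝ), (Real.sin θ₀ : ℝ))
      have e2 : fderiv ℝ (pd2 u) x ((Real.cos θ₀ : ℝ), (Real.sin θ₀ : ℝ))
          = ((Real.cos θ₀ : ℝ) : ℂ) * pd1 (pd2 u) x + ((Real.sin θ₀ : ℝ) : ℂ) * pd2 (pd2 u) x :=
        fderiv_pd_eval (pd2 u) x ((Real.cos θ₀ : ℝ), (Real.sin θ₀ : ℝ))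
      rw [hc, e0, e1, e2]
      ring
    rw [hVp.fderiv_eq] at n2
    have hc6 := fderiv_comb6_apply du1 du2 du11 du21 du12 du22
      (C₂ * (Real.cos θ₀ : ℂ)) (C₂ * (Real.sin θ₀ : ℂ))
      (-(Real.sin θ₀ : ℂ) * (Real.cos θ₀ : ℂ)) (-(Real.sin θ₀ : ℂ) * (Real.sin θ₀ : ℂ))
      ((Real.cos θ₀ : ℂ) * (Real.cos θ₀ : ℂ)) ((Real.cos θ₀ : ℂ) * (Real.sin θ₀ : ℂ))
      ((Real.cos θ₀ : ℝ), (Real.sin θ₀ : ℝ))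
    rw [hc6, fd_eval (pd1 u), fd_eval (pd2 u), fd_eval (pd1 (pd1 u)), fd_eval (pd2 (pd1 u)),
      fd_eval (pd1 (pd2 u)), fd_eval (pd2 (pd2 u))] at n2
    exact n2
  ------------------------------------------------------------------
  -- PDE equations
  ------------------------------------------------------------------
  have rawP0 : pd1 (pd1 u) 0 + pd2 (pd2 u) 0 + (lam : ℂ) * u 0 = 0 := hu_eq 0 h0
  have hPev : (fun x => (1:ℂ) * pd1 (pd1 u) x + (1:ℂ) * pd2 (pd2 u) x + (lam : ℂ) * u x)
      =ᶠ[𝓝 (0 : ℝ × ℝ)] (fun _ => (0 : ℂ)) := by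
    filter_upwards [hΩ.mem_nhds h0] with x hx
    linear_combination hu_eq x hx
  have hPd : fderiv ℝ (fun x => (1:ℂ) * pd1 (pd1 u) x + (1:ℂ) * pd2 (pd2 u) x
      + (lam : ℂ) * u x) 0 = 0 := by
    rw [hPev.fderiv_eq, fderiv_fun_const]
    rfl
  have rawP1 : (1:ℂ) * pd1 (pd1 (pd1 u)) 0 + (1:ℂ) * pd1 (pd2 (pd2 u)) 0
      + (lam : ℂ) * pd1 u 0 = 0 := by
    have hc := fderiv_comb3_apply du11 du22 du0 (1:ℂ) (1:ℂ) ((lam : ℂ)) ((1:ℝ), (0:ℝ))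
    have happ : fderiv ℝ (fun x => (1:ℂ) * pd1 (pd1 u) x + (1:ℂ) * pd2 (pd2 u) x
        + (lam : ℂ) * u x) 0 ((1:ℝ), (0:ℝ)) = 0 := by rw [hPd]; rfl
    rw [hc] at happ
    exact happ
  have rawP2 : (1:ℂ) * pd2 (pd1 (pd1 u)) 0 + (1:ℂ) * pd2 (pd2 (pd2 u)) 0
      + (lam : ℂ) * pd2 u 0 = 0 := by
    have hc := fderiv_comb3_apply du11 du22 du0 (1:ℂ) (1:ℂ) ((lam : ℂ)) ((0:ℝ), (1:ℝ))
    have happ : fderiv ℝ (fun x => (1:ℂ) * pd1 (pd1 u) x + (1:ℂ) * pd2 (pd2 u) x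
        + (lam : ℂ) * u x) 0 ((0:ℝ), (1:ℝ)) = 0 := by rw [hPd]; rfl
    rw [hc] at happ
    exact happ
  ------------------------------------------------------------------
  -- Algebra
  ------------------------------------------------------------------
  rw [sw_u] at rawE5 rawE6
  rw [t211] at rawE6 rawP2
  rw [t121] at rawE6
  rw [t212] at rawE6
  rw [t221] at rawE6
  rw [hcos, hsin] at rawE4 rawE5 rawE6
  push_cast at rawE4 rawE5 rawE6
  set S : ℂ := ((Real.sqrt 3 : ℝ) : ℂ) with hSdef
  have hS : S ^ 2 = 3 := by
    rw [hSdef, ← Complex.ofReal_pow, Real.sq_sqrt (by norm_num : (0:ℝ) ≤ 3)]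
    norm_num
  set a := u 0
  set p := pd1 u 0
  set q := pd2 u 0
  set A := pd1 (pd1 u) 0
  set B := pd1 (pd2 u) 0
  set Cv := pd2 (pd2 u) 0
  set Dv := pd1 (pd1 (pd1 u)) 0
  set Ev := pd1 (pd1 (pd2 u)) 0
  set Fv := pd1 (pd2 (pd2 u)) 0
  set Gv := pd2 (pd2 (pd2 u)) 0
  -- clean forms
  have e1c : q = C₁ * a := by linear_combination -rawE1
  have e2c : B = C₁ * p := by linear_combination -rawE2
  have e3c : Ev = C₁ * A := by linear_combination -rawE3
  have e4c : S * p = q + 2 * C₂ * a := by linear_combination (-2 : ℂ) * rawE4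
  have e5c : S * A + 2 * B = S * Cv + 2 * C₂ * p + 2 * S * C₂ * q := by
    linear_combination (-4 : ℂ) * rawE5 - B * hS
  have e6c : S * Dv + 5 * Ev + S * Fv = 3 * Gv + 2 * C₂ * A + 4 * S * C₂ * B + 6 * C₂ * Cv := by
    linear_combination (-8 : ℂ) * rawE6 + (-2 * Ev - S * Fv + Gv + 2 * C₂ * Cv) * hS
  have p0 : A + Cv + (lam : ℂ) * a = 0 := rawP0
  have p1 : Dv + Fv + (lam : ℂ) * p = 0 := by linear_combination rawP1
  have p2 : Ev + Gv + (lam : ℂ) * q = 0 := by linear_combination rawP2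
  have hp : S * p = (C₁ + 2 * C₂) * a := by linear_combination e4c + e1c
  have hA : 6 * A = (4 * C₂ ^ 2 + 4 * C₁ * C₂ - 2 * C₁ ^ 2 - 3 * (lam : ℂ)) * a := by
    linear_combination S * e5c + (Cv - A + 2 * C₂ * q) * hS + 3 * p0 + (-2 * S) * e2c
      + (2 * (C₂ - C₁)) * hp + 6 * C₂ * e1c
  have key : (C₂ - C₁) * (3 * (lam : ℂ) + 4 * (C₁ ^ 2 + C₁ * C₂ + C₂ ^ 2)) * a = 0 := by
    linear_combination (3/2 : ℂ) * e6c + (-(3/2 : ℂ)) * S * p1 + (9/2 : ℂ) * p2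
      + (-12 : ℂ) * e3c + 6 * S * C₂ * e2c + 9 * C₂ * p0 + (-(9/2 : ℂ)) * (lam : ℂ) * e1c
      + (3/2 : ℂ) * ((lam : ℂ) + 4 * C₁ * C₂) * hp + (-(8 * C₁ + 4 * C₂) / 4) * hA
  -- conclusion
  have hlamC : (lam : ℂ) ≠ 0 := by
    simp only [ne_eq, Complex.ofReal_eq_zero]
    exact ne_of_gt hlam
  have h2 : 3 * (lam : ℂ) + 4 * (C₁ ^ 2 + C₁ * C₂ + C₂ ^ 2) ≠ 0 := by
    intro hcontra
    apply hgen
    have h3l : (3 * (lam : ℂ)) ≠ 0 := by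
      intro hz; apply hlamC
      have := mul_eq_zero.mp hz
      rcases this with h' | h'
      · norm_num at h'
      · exact h'
    field_simp
    linear_combination hcontra
  have h3 : C₂ - C₁ ≠ 0 := sub_ne_zero.2 (Ne.symm hC)
  have h4 : (C₂ - C₁) * (3 * (lam : ℂ) + 4 * (C₁ ^ 2 + C₁ * C₂ + C₂ ^ 2)) ≠ 0 := mul_ne_zero h3 h2
  rcases mul_eq_zero.mp key with h' | h'
  · exact absurd h' h4
  · exact h'
end
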